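/- If p1, p2 ∈ k^5 have first coordinate zero (x(p1) = x(p2) = 0) and nonzero equal second coordinate (s(p1) = s(p2) ≠ 0), and f_i(p1) = f_i(p2) for i = 4,5,6, then f(p1) = f(p2) for every f ∈ ker D. -/

import Mathlib

open MvPolynomial

theorem flow_deriv
    (K : Type*) [Field K] [CharZero K]
    (D : Derivation K (MvPolynomial (Fin 5) K) (MvPolynomial (Fin 5) K))
    (hx : D (X 0) = 0) (hs : D (X 1) = X 0 ^ 3) (ht : D (X 2) = X 1)
    (hu : D (X 3) = X 2) (hv : D (X 4) = X 0 ^ 2)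
    (q : Fin 5 → Polynomial K)
    (hq0 : q 0 = 0)
    (hq1 : Polynomial.derivative (q 1) = 0)
    (hq2 : Polynomial.derivative (q 2) = q 1)
    (hq3 : Polynomial.derivative (q 3) = q 2)
    (hq4 : Polynomial.derivative (q 4) = 0)
    (f : MvPolynomial (Fin 5) K) :
    Polynomial.derivative (aeval q f) = aeval q (D f) := by
  induction f using MvPolynomial.induction_on with
  | C a =>
      have : D (MvPolynomial.C (σ := Fin 5) a) = 0 := by
        rw [show (MvPolynomial.C (σ := Fin 5) a) = algebraMap K _ a from rfl]
        exact Derivation.map_algebraMap D a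
      simp [this]
  | add p r hp hr => simp [hp, hr]
  | mul_X p i hp =>
      have hqi : aeval q (D (X i)) = Polynomial.derivative (q i) := by
        fin_cases i <;> simp [hx, hs, ht, hu, hv, hq0, hq1, hq2, hq3, hq4]
      rw [map_mul, Derivation.leibniz, map_add]
      simp only [smul_eq_mul, map_mul, aeval_X, Polynomial.derivative_mul, hp, hqi]
      ring

theorem separating_case_x_zero_s_nonzero
    (K : Type*) [Field K] [CharZero K]
    (D : Derivation K (MvPolynomial (Fin 5) K) (MvPolynomial (Fin 5) K))
    (hx : D (X 0) = 0) (hs : D (X 1) = X 0 ^ 3) (ht : D (X 2) = X 1)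
    (hu : D (X 3) = X 2) (hv : D (X 4) = X 0 ^ 2)
    (f₄ f₅ f₆ : MvPolynomial (Fin 5) K)
    (hf₄ : f₄ = X 0 * X 4 - X 1)
    (hf₅ : f₅ = X 0 ^ 2 * X 2 * X 1 - X 1 ^ 2 * X 4 + 2 * X 0 ^ 3 * X 2 * X 4
        - 3 * X 0 ^ 5 * X 3)
    (hf₆ : f₆ = -18 * X 0 ^ 3 * X 2 * X 1 * X 3 + 9 * X 0 ^ 6 * X 3 ^ 2
        + 8 * X 0 ^ 3 * X 2 ^ 3 + 6 * X 1 ^ 3 * X 3 - 3 * X 2 ^ 2 * X 1 ^ 2)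
    (p₁ p₂ : Fin 5 → K)
    (hp₁x : p₁ 0 = 0) (hp₂x : p₂ 0 = 0)
    (hps : p₁ 1 = p₂ 1) (hpsne : p₁ 1 ≠ 0)
    (h₄ : eval p₁ f₄ = eval p₂ f₄)
    (h₅ : eval p₁ f₅ = eval p₂ f₅)
    (h₆ : eval p₁ f₆ = eval p₂ f₆) :
    ∀ f : MvPolynomial (Fin 5) K, D f = 0 → eval p₁ f = eval p₂ f := by
  intro f hf
  subst hf₅ hf₆
  simp only [map_sub, map_add, map_mul, map_pow, map_neg, map_ofNat, eval_X, eval_mul,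
    eval_pow, hp₁x, hp₂x] at h₅ h₆
  rw [← hps] at h₅ h₆
  -- v coordinates agree
  have hv' : p₁ 4 = p₂ 4 := by
    have h : p₁ 1 ^ 2 * p₁ 4 = p₁ 1 ^ 2 * p₂ 4 := by
      linear_combination -h₅
    exact mul_left_cancel₀ (pow_ne_zero 2 hpsne) h
  -- invariant 2su - t^2 agrees
  have hΔ : 2 * p₁ 1 * p₁ 3 - p₁ 2 ^ 2 = 2 * p₁ 1 * p₂ 3 - p₂ 2 ^ 2 := by
    have h : (3 * p₁ 1 ^ 2) * (2 * p₁ 1 * p₁ 3 - p₁ 2 ^ 2)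
        = (3 * p₁ 1 ^ 2) * (2 * p₁ 1 * p₂ 3 - p₂ 2 ^ 2) := by
      linear_combination h₆
    have h3 : (3 : K) * p₁ 1 ^ 2 ≠ 0 := mul_ne_zero (by norm_num) (pow_ne_zero 2 hpsne)
    exact mul_left_cancel₀ h3 h
  set c₀ : K := (p₂ 2 - p₁ 2) / p₁ 1 with hc₀
  set q : Fin 5 → Polynomial K :=
    ![0, Polynomial.C (p₁ 1), Polynomial.C (p₁ 2) + Polynomial.C (p₁ 1) * Polynomial.X,
      Polynomial.C (p₁ 3) + Polynomial.C (p₁ 2) * Polynomial.X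
        + Polynomial.C (p₁ 1 / 2) * Polynomial.X ^ 2, Polynomial.C (p₁ 4)] with hq
  have hC2 : (Polynomial.C (p₁ 1 / 2) : Polynomial K) * Polynomial.C 2 = Polynomial.C (p₁ 1) := by
    rw [← map_mul, div_mul_cancel₀ _ (two_ne_zero (α := K))]
  have hder : Polynomial.derivative (aeval q f) = 0 := by
    rw [flow_deriv K D hx hs ht hu hv q (by simp [hq]) (by simp [hq]) (by simp [hq])
      (by simp [hq]; linear_combination Polynomial.X * hC2 - Polynomial.C (p₁ 1 / 2) * Polynomial.X * (Polynomial.C_ofNat (R := K) 2)) (by simp [hq]) f, hf, map_zero]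
  have hconst := Polynomial.eq_C_of_derivative_eq_zero hder
  have hcomp : ∀ a : K, Polynomial.eval a (aeval q f) = eval (fun i => Polynomial.eval a (q i)) f := by
    intro a
    have hh : (Polynomial.aeval a).comp (aeval q)
        = (aeval (fun i => Polynomial.eval a (q i)) : MvPolynomial (Fin 5) K →ₐ[K] K) := by
      apply MvPolynomial.algHom_ext; intro i; simp
    have h2 := AlgHom.congr_fun hh f
    simpa using h2
  have hpt1 : (fun i => Polynomial.eval 0 (q i)) = p₁ := by
    funext i; fin_cases i <;> simp [hq, hp₁x]
  have hpt2 : (fun i => Polynomial.eval c₀ (q i)) = p₂ := by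
    funext i
    fin_cases i
    · simp [hq, hp₂x]
    · simpa [hq] using hps
    · simp only [hq, Fin.reduceFinMk, Matrix.cons_val, Matrix.cons_val_two, Matrix.tail_cons, Matrix.head_cons, Polynomial.eval_add,
        Polynomial.eval_mul, Polynomial.eval_C, Polynomial.eval_X]
      show _ = p₂ 2
      rw [hc₀]
      field_simp
      ring
    · simp only [hq, Fin.reduceFinMk, Matrix.cons_val, Matrix.cons_val_three, Matrix.tail_cons, Matrix.head_cons, Polynomial.eval_add,
        Polynomial.eval_mul, Polynomial.eval_C, Polynomial.eval_X, Polynomial.eval_pow]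
      show _ = p₂ 3
      rw [hc₀]
      field_simp
      linear_combination hΔ
    · simpa [hq] using hv'
  calc eval p₁ f = Polynomial.eval 0 (aeval q f) := by rw [hcomp 0, hpt1]
    _ = Polynomial.eval c₀ (aeval q f) := by rw [hconst]; simp
    _ = eval p₂ f := by rw [hcomp c₀, hpt2]
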